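/- Let a ∈ ℝ with a ≠ 0 and define A : ℝ → ℝ by A(x) = −(1/a³) [ (a² − 1/2) exp(−2a(x−1)) + a² x² − (2a² + a) x + (a + 1/2) ]. Then: (i) A''(x) + 2a A'(x) = 4 − 4x for all x ∈ ℝ; (ii) A(1) = 0 and A'(1) = 2; (iii) if moreover (a² − 1/2) exp(−4a) + 3a² − 2a + 1/2 = 0, then A(3) = 0 and A'(3) = −6. -/

import Mathlib

/-- Explicit solution of the soliton ODE on `ℂP²` blown up at one point:
`A(x) = -(1/a³)[(a² - 1/2)·exp(-2a(x-1)) + a²x² - (2a² + a)x + (a + 1/2)]` satisfies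
(i) `A'' + 2aA' = 4 - 4x`, (ii) `A(1) = 0`, `A'(1) = 2`, and (iii) if
`(a² - 1/2)e^{-4a} + 3a² - 2a + 1/2 = 0` then `A(3) = 0` and `A'(3) = -6`. -/
theorem stmt12 (a : ℝ) (ha : a ≠ 0) (A : ℝ → ℝ)
    (hA : ∀ x, A x = -(1 / a ^ 3) *
      ((a ^ 2 - 1 / 2) * Real.exp (-2 * a * (x - 1)) + a ^ 2 * x ^ 2
        - (2 * a ^ 2 + a) * x + (a + 1 / 2))) :
    (∀ x, deriv (deriv A) x + 2 * a * deriv A x = 4 - 4 * x)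
    ∧ (A 1 = 0 ∧ deriv A 1 = 2)
    ∧ ((a ^ 2 - 1 / 2) * Real.exp (-4 * a) + 3 * a ^ 2 - 2 * a + 1 / 2 = 0 →
        A 3 = 0 ∧ deriv A 3 = -6) := by
  have hAfun : A = fun x => -(1 / a ^ 3) *
      ((a ^ 2 - 1 / 2) * Real.exp (-2 * a * (x - 1)) + a ^ 2 * x ^ 2
        - (2 * a ^ 2 + a) * x + (a + 1 / 2)) := funext hA
  have hexp : ∀ x : ℝ, HasDerivAt (fun x : ℝ => Real.exp (-2 * a * (x - 1)))
      (Real.exp (-2 * a * (x - 1)) * (-2 * a * 1)) x := by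
    intro x
    exact (((hasDerivAt_id x).sub_const 1).const_mul (-2 * a)).exp
  have hB : ∀ x : ℝ, HasDerivAt A
      (-(1 / a ^ 3) * ((a ^ 2 - 1 / 2) * (Real.exp (-2 * a * (x - 1)) * (-2 * a * 1))
        + a ^ 2 * (2 * x) - (2 * a ^ 2 + a) * 1 + 0)) x := by
    intro x
    rw [hAfun]
    apply HasDerivAt.const_mul
    have h1 := ((hexp x).const_mul (a ^ 2 - 1 / 2)).add
      (((hasDerivAt_pow 2 x).const_mul (a ^ 2)))
    have h2 := (h1.sub ((hasDerivAt_id x).const_mul (2 * a ^ 2 + a))).add_const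
      (a + 1 / 2)
    convert h2 using 1
    · rfl
    · rfl
    ring
  have hdA : deriv A = fun x =>
      -(1 / a ^ 3) * ((a ^ 2 - 1 / 2) * (Real.exp (-2 * a * (x - 1)) * (-2 * a * 1))
        + a ^ 2 * (2 * x) - (2 * a ^ 2 + a) * 1 + 0) := by
    funext x; exact (hB x).deriv
  have hB2 : ∀ x : ℝ, HasDerivAt (deriv A)
      (-(1 / a ^ 3) * ((a ^ 2 - 1 / 2) * ((Real.exp (-2 * a * (x - 1)) * (-2 * a * 1)) * (-2 * a * 1))
        + a ^ 2 * 2)) x := by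
    intro x
    rw [hdA]
    apply HasDerivAt.const_mul
    have h1 := ((hexp x).mul_const (-2 * a * 1)).const_mul (a ^ 2 - 1 / 2)
    have h2 := ((h1.add (((hasDerivAt_id x).const_mul 2).const_mul (a ^ 2))).sub_const
      ((2 * a ^ 2 + a) * 1)).add_const 0
    convert h2 using 1
    · rfl
    · rfl
    ring
  have hddA : ∀ x : ℝ, deriv (deriv A) x =
      -(1 / a ^ 3) * ((a ^ 2 - 1 / 2) * ((Real.exp (-2 * a * (x - 1)) * (-2 * a * 1)) * (-2 * a * 1))
        + a ^ 2 * 2) := fun x => (hB2 x).deriv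
  have ha3 : a ^ 3 ≠ 0 := pow_ne_zero 3 ha
  refine ⟨?_, ⟨?_, ?_⟩, ?_⟩
  · intro x
    rw [hddA x, hdA]
    field_simp
    ring
  · rw [hA 1]
    norm_num
    right; ring
  · rw [hdA]
    simp only
    norm_num
    field_simp
    ring
  · intro h
    have h34 : (-2 : ℝ) * a * (3 - 1) = -4 * a := by ring
    constructor
    · rw [hA 3, h34]
      set E := Real.exp (-4 * a) with hE
      field_simp
      linear_combination (-2 : ℝ) * h
    · rw [hdA]
      simp only
      rw [h34]
      set E := Real.exp (-4 * a) with hE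
      field_simp
      linear_combination (2 * a) * h
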